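/- If A₁, A₂ are symmetric n×n matrices and there exist μ₁, μ₂ ∈ R with μ₁A₁ + μ₂A₂ positive definite, then the set E = {x ∈ R^n : x^T A₁ x = 1 and x^T A₂ x = 1} is compact. -/

import Mathlib

open Matrix

/-- The quadratic form `xᵀ A x` on Euclidean space. -/
noncomputable def quadForm {n : ℕ} (A : Matrix (Fin n) (Fin n) ℝ)
    (x : EuclideanSpace ℝ (Fin n)) : ℝ :=
  ∑ i, ∑ j, A i j * x i * x j

lemma quadForm_eq_dot {n : ℕ} (A : Matrix (Fin n) (Fin n) ℝ)
    (x : EuclideanSpace ℝ (Fin n)) :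
    quadForm A x = (x : Fin n → ℝ) ⬝ᵥ A.mulVec x := by
  unfold quadForm
  rw [dotProduct, Finset.sum_congr rfl]
  intro i _
  rw [mulVec, dotProduct, Finset.mul_sum]
  exact Finset.sum_congr rfl fun j _ => by ring

lemma quadForm_continuous {n : ℕ} (A : Matrix (Fin n) (Fin n) ℝ) :
    Continuous (quadForm A) := by
  unfold quadForm
  refine continuous_finset_sum _ fun i _ => continuous_finset_sum _ fun j _ => ?_
  have hc : ∀ k : Fin n, Continuous fun x : EuclideanSpace ℝ (Fin n) => x k := by
    intro k
    exact (EuclideanSpace.proj k).continuous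
  exact (continuous_const.mul (hc i)).mul (hc j)

lemma qs {n : ℕ} (B : Matrix (Fin n) (Fin n) ℝ) (a : ℝ) (x : Fin n → ℝ) :
    (a • x) ⬝ᵥ B.mulVec (a • x) = a * a * (x ⬝ᵥ B.mulVec x) := by
  rw [mulVec_smul, smul_dotProduct, dotProduct_smul]
  simp [mul_assoc]

theorem stmt2 {n : ℕ} (A₁ A₂ : Matrix (Fin n) (Fin n) ℝ) (h1 : A₁ᵀ = A₁) (h2 : A₂ᵀ = A₂)
    (μ₁ μ₂ : ℝ)
    (hpd : ∀ x : Fin n → ℝ, x ≠ 0 → 0 < x ⬝ᵥ (μ₁ • A₁ + μ₂ • A₂).mulVec x) :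
    IsCompact {x : EuclideanSpace ℝ (Fin n) | quadForm A₁ x = 1 ∧ quadForm A₂ x = 1} := by
  set B := μ₁ • A₁ + μ₂ • A₂ with hB
  set E := {x : EuclideanSpace ℝ (Fin n) | quadForm A₁ x = 1 ∧ quadForm A₂ x = 1} with hE
  -- the combined quadratic form is constant on E
  have hqE : ∀ x ∈ E, (x : Fin n → ℝ) ⬝ᵥ B.mulVec x = μ₁ + μ₂ := by
    intro x hx
    have e1 := (quadForm_eq_dot A₁ x).symm.trans hx.1
    have e2 := (quadForm_eq_dot A₂ x).symm.trans hx.2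
    rw [hB, add_mulVec, dotProduct_add, smul_mulVec, smul_mulVec,
      dotProduct_smul, dotProduct_smul, smul_eq_mul, smul_eq_mul, e1, e2, mul_one, mul_one]
  have hclosed : IsClosed E := by
    rw [hE]
    exact (isClosed_eq (quadForm_continuous A₁) continuous_const).inter
      (isClosed_eq (quadForm_continuous A₂) continuous_const)
  rcases Nat.eq_zero_or_pos n with hn | hn
  · -- n = 0 : E is empty
    subst hn
    convert isCompact_empty
    rw [hE, Set.eq_empty_iff_forall_notMem]
    intro x hx
    have := hx.1
    simp [quadForm] at this
  · -- n > 0 : sphere is nonempty and compact, get a positive lower bound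
    rw [Metric.isCompact_iff_isClosed_bounded]
    refine ⟨hclosed, ?_⟩
    have hsne : (Metric.sphere (0 : EuclideanSpace ℝ (Fin n)) 1).Nonempty :=
      ⟨EuclideanSpace.single ⟨0, hn⟩ 1, by simp⟩
    have hcont : Continuous fun x : EuclideanSpace ℝ (Fin n) =>
        (x : Fin n → ℝ) ⬝ᵥ B.mulVec x := by
      have : (fun x : EuclideanSpace ℝ (Fin n) => (x : Fin n → ℝ) ⬝ᵥ B.mulVec x)
          = quadForm B := by
        funext x; exact (quadForm_eq_dot B x).symm
      rw [this]; exact quadForm_continuous B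
    obtain ⟨u, hu, hmin⟩ := (isCompact_sphere (0 : EuclideanSpace ℝ (Fin n)) 1).exists_isMinOn
      hsne hcont.continuousOn
    set c := (u : Fin n → ℝ) ⬝ᵥ B.mulVec u with hc
    have hune : (u : Fin n → ℝ) ≠ 0 := by
      intro h0
      have : ‖u‖ = 1 := by simpa using hu
      rw [show u = 0 from PiLp.ext fun i => congrFun h0 i] at this
      simp at this
    have hcpos : 0 < c := hpd _ hune
    rw [isBounded_iff_forall_norm_le]
    refine ⟨Real.sqrt ((μ₁ + μ₂) / c), ?_⟩
    intro x hx
    rcases eq_or_ne x 0 with rfl | hxne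
    · simp [Real.sqrt_nonneg]
    · have hxn : (0 : ℝ) < ‖x‖ := norm_pos_iff.mpr hxne
      set v : EuclideanSpace ℝ (Fin n) := ‖x‖⁻¹ • x with hv
      have hvs : v ∈ Metric.sphere (0 : EuclideanSpace ℝ (Fin n)) 1 := by
        simp [hv, norm_smul, abs_of_pos (inv_pos.mpr hxn), inv_mul_cancel₀ hxn.ne']
      have hle := hmin hvs
      have hqv : (v : Fin n → ℝ) ⬝ᵥ B.mulVec v
          = ‖x‖⁻¹ * ‖x‖⁻¹ * ((x : Fin n → ℝ) ⬝ᵥ B.mulVec x) := qs B _ _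
      simp only [Set.mem_setOf_eq] at hle
      rw [hqv, hqE x hx] at hle
      -- c ≤ ‖x‖⁻² * (μ₁+μ₂)  ⇒  ‖x‖² ≤ (μ₁+μ₂)/c
      have h2 : c * (‖x‖ * ‖x‖) ≤ μ₁ + μ₂ := by
        have := mul_le_mul_of_nonneg_right hle (le_of_lt (mul_pos hxn hxn))
        calc c * (‖x‖ * ‖x‖) ≤ ‖x‖⁻¹ * ‖x‖⁻¹ * (μ₁ + μ₂) * (‖x‖ * ‖x‖) := this
          _ = μ₁ + μ₂ := by field_simp
      have h3 : ‖x‖ * ‖x‖ ≤ (μ₁ + μ₂) / c := by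
        rw [le_div_iff₀ hcpos]; linarith [h2]
      calc ‖x‖ = Real.sqrt (‖x‖ * ‖x‖) := by rw [Real.sqrt_mul_self (norm_nonneg x)]
        _ ≤ Real.sqrt ((μ₁ + μ₂) / c) := Real.sqrt_le_sqrt h3
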